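/- For an odd positive integer n, the number of monic divisors of xⁿ - 1 in (ℤ/4)[x] equals 2^r, where r is the number of monic irreducible factors of xⁿ-1 in (ℤ/2)[x]; equivalently, monic divisors of xⁿ-1 over ℤ/4 are in bijection with monic divisors of xⁿ-1 over ℤ/2. -/

import Mathlib

open Polynomial

namespace NMDaux

lemma dvd24 : (2:ℕ) ∣ 4 := by norm_num

noncomputable section

def pi4 : Polynomial (ZMod 4) →+* Polynomial (ZMod 2) :=
  mapRingHom (ZMod.castHom dvd24 (ZMod 2))

def half : ZMod 4 → ZMod 4 := fun c => if c = 2 then 1 else 0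

lemma cast_eq_zero_iff (c : ZMod 4) :
    ZMod.castHom dvd24 (ZMod 2) c = 0 ↔ 2 * c = 0 := by revert c; decide

lemma two_mul_half (c : ZMod 4) (h : 2 * c = 0) : 2 * half c = c := by revert c; decide

lemma cast_val (a : ZMod 2) :
    ZMod.castHom dvd24 (ZMod 2) ((a.val : ZMod 4)) = a := by revert a; decide

def H (p : Polynomial (ZMod 4)) : Polynomial (ZMod 4) :=
  ∑ i ∈ p.support, C (half (p.coeff i)) * X ^ i

lemma coeff_H (p : Polynomial (ZMod 4)) (i : ℕ) : (H p).coeff i = half (p.coeff i) := by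
  simp only [H, finset_sum_coeff, coeff_C_mul, coeff_X_pow, mul_ite, mul_one, mul_zero]
  rw [Finset.sum_ite_eq p.support i (fun j => half (p.coeff j))]
  split_ifs with h
  · rfl
  · rw [notMem_support_iff.mp h]; simp only [half]; decide

lemma two_mul_coeff (p : Polynomial (ZMod 4)) (i : ℕ) :
    ((2 : Polynomial (ZMod 4)) * p).coeff i = 2 * p.coeff i := by
  rw [two_mul, coeff_add, ← two_mul]

lemma pi4_eq_zero_iff (p : Polynomial (ZMod 4)) : pi4 p = 0 ↔ (2 : Polynomial (ZMod 4)) * p = 0 := by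
  simp only [Polynomial.ext_iff, pi4, coe_mapRingHom, coeff_map, coeff_zero, two_mul_coeff]
  exact forall_congr' fun i => cast_eq_zero_iff _

lemma eq_two_H (p : Polynomial (ZMod 4)) (h : pi4 p = 0) : p = 2 * H p := by
  rw [pi4_eq_zero_iff] at h
  ext i
  rw [two_mul_coeff, coeff_H, two_mul_half]
  have := congrArg (fun q => Polynomial.coeff q i) h
  simpa [two_mul_coeff] using this

end
end NMDaux
namespace NMDaux
noncomputable section

def plift (q : Polynomial (ZMod 2)) : Polynomial (ZMod 4) :=
  ∑ i ∈ q.support, C (((q.coeff i).val : ZMod 4)) * X ^ i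

lemma coeff_plift (q : Polynomial (ZMod 2)) (i : ℕ) :
    (plift q).coeff i = ((q.coeff i).val : ZMod 4) := by
  simp only [plift, finset_sum_coeff, coeff_C_mul, coeff_X_pow, mul_ite, mul_one, mul_zero]
  rw [Finset.sum_ite_eq q.support i (fun j => ((q.coeff j).val : ZMod 4))]
  split_ifs with h
  · rfl
  · rw [notMem_support_iff.mp h]; decide

lemma pi4_plift (q : Polynomial (ZMod 2)) : pi4 (plift q) = q := by
  ext i
  simp only [pi4, coe_mapRingHom, coeff_map, coeff_plift, cast_val]

lemma degree_plift_le (q : Polynomial (ZMod 2)) : (plift q).degree ≤ q.degree := by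
  rw [degree_le_iff_coeff_zero]
  intro m hm
  rw [coeff_plift, coeff_eq_zero_of_degree_lt hm]
  decide

lemma degree_two_plift_le (q : Polynomial (ZMod 2)) :
    ((2 : Polynomial (ZMod 4)) * plift q).degree ≤ q.degree := by
  rw [degree_le_iff_coeff_zero]
  intro m hm
  rw [two_mul_coeff, coeff_plift, coeff_eq_zero_of_degree_lt hm]
  decide

lemma plift_monic {q : Polynomial (ZMod 2)} (hq : q.Monic) :
    (plift q).Monic ∧ (plift q).degree = q.degree := by
  have hc : (plift q).coeff q.natDegree = 1 := by
    rw [coeff_plift, hq.coeff_natDegree]; decide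
  have hnd : (plift q).natDegree ≤ q.natDegree := natDegree_le_natDegree (degree_plift_le q)
  have hm : (plift q).Monic := monic_of_natDegree_le_of_coeff_eq_one _ hnd hc
  refine ⟨hm, le_antisymm (degree_plift_le q) ?_⟩
  rw [degree_eq_natDegree hq.ne_zero]
  exact le_degree_of_ne_zero (by rw [hc]; decide)

end
end NMDaux
namespace NMDaux
noncomputable section

lemma cop_of_ne {p q : Polynomial (ZMod 2)} (hp : p.Monic ∧ Irreducible p)
    (hq : q.Monic ∧ Irreducible q) (hne : p ≠ q) : IsCoprime p q := by
  rw [← isRelPrime_iff_isCoprime, hp.2.isRelPrime_iff_not_dvd]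
  intro hdvd
  exact hne (eq_of_monic_of_associated hp.1 hq.1 (hp.2.associated_of_dvd hq.2 hdvd))

lemma sf_prod (S : Finset (Polynomial (ZMod 2)))
    (hirr : ∀ p ∈ S, p.Monic ∧ Irreducible p) : Squarefree (∏ p ∈ S, p) := by
  classical
  induction S using Finset.induction_on with
  | empty => simpa using squarefree_one
  | @insert a s hmem ih =>
    rw [Finset.prod_insert hmem, squarefree_mul_iff]
    refine ⟨?_, (hirr a (Finset.mem_insert_self a s)).2.squarefree,
      ih (fun p hp => hirr p (Finset.mem_insert_of_mem hp))⟩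
    rw [isRelPrime_iff_isCoprime]
    exact IsCoprime.prod_right fun p hp =>
      cop_of_ne (hirr a (Finset.mem_insert_self a s)) (hirr p (Finset.mem_insert_of_mem hp))
        (fun h => hmem (h ▸ hp))

end
end NMDaux
namespace NMDaux
noncomputable section

variable {S : Finset (Polynomial (ZMod 2))}

lemma mem_of_dvd_prod (hirr : ∀ p ∈ S, p.Monic ∧ Irreducible p)
    {T : Finset (Polynomial (ZMod 2))} (hT : T ⊆ S) {p : Polynomial (ZMod 2)}
    (hp : p ∈ S) (hdvd : p ∣ ∏ q ∈ T, q) : p ∈ T := by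
  have hprime : Prime p := (hirr p hp).2.prime
  obtain ⟨q, hqT, hpq⟩ := hprime.exists_mem_finset_dvd hdvd
  have : p = q := eq_of_monic_of_associated (hirr p hp).1 (hirr q (hT hqT)).1
    ((hirr p hp).2.associated_of_dvd (hirr q (hT hqT)).2 hpq)
  exact this ▸ hqT

lemma count2 (hirr : ∀ p ∈ S, p.Monic ∧ Irreducible p) :
    Nat.card {g : Polynomial (ZMod 2) // g.Monic ∧ g ∣ ∏ p ∈ S, p} = 2 ^ S.card := by
  classical
  have hsf : Squarefree (∏ p ∈ S, p) := sf_prod S hirr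
  set F := ∏ p ∈ S, p with hF
  let φ : {T : Finset (Polynomial (ZMod 2)) // T ∈ S.powerset} →
      {g : Polynomial (ZMod 2) // g.Monic ∧ g ∣ F} := fun T =>
    ⟨∏ p ∈ T.1, p, monic_prod_of_monic _ _ (fun p hp => (hirr p (Finset.mem_powerset.mp T.2 hp)).1),
      Finset.prod_dvd_prod_of_subset _ _ _ (Finset.mem_powerset.mp T.2)⟩
  have hbij : Function.Bijective φ := by
    constructor
    · rintro ⟨T₁, h₁⟩ ⟨T₂, h₂⟩ h
      have h' : ∏ p ∈ T₁, p = ∏ p ∈ T₂, p := congrArg Subtype.val h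
      have hsub : ∀ (A B : Finset (Polynomial (ZMod 2))), A ∈ S.powerset → B ∈ S.powerset →
          (∏ p ∈ A, p = ∏ p ∈ B, p) → A ⊆ B := by
        intro A B hA hB hAB p hpA
        exact mem_of_dvd_prod hirr (Finset.mem_powerset.mp hB)
          (Finset.mem_powerset.mp hA hpA) (hAB ▸ Finset.dvd_prod_of_mem _ hpA)
      exact Subtype.ext (le_antisymm (hsub T₁ T₂ h₁ h₂ h') (hsub T₂ T₁ h₂ h₁ h'.symm))
    · rintro ⟨g, hgm, hgd⟩
      refine ⟨⟨S.filter (· ∣ g), Finset.mem_powerset.mpr (Finset.filter_subset _ _)⟩, ?_⟩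
      have h1 : ∏ p ∈ S.filter (· ∣ g), p ∣ g := by
        apply Finset.prod_dvd_of_coprime
        · intro p hp q hq hne
          exact cop_of_ne (hirr p (Finset.mem_filter.mp hp).1) (hirr q (Finset.mem_filter.mp hq).1) hne
        · intro p hp; exact (Finset.mem_filter.mp hp).2
      have h2 : g ∣ ∏ p ∈ S.filter (· ∣ g), p := by
        have hcop : IsCoprime g (∏ p ∈ S.filter (fun p => ¬ p ∣ g), p) := by
          apply IsCoprime.prod_right
          intro p hp
          apply IsCoprime.symm
          rw [← isRelPrime_iff_isCoprime,
            (hirr p (Finset.mem_filter.mp hp).1).2.isRelPrime_iff_not_dvd]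
          exact (Finset.mem_filter.mp hp).2
        have hsplit : F = (∏ p ∈ S.filter (· ∣ g), p) * ∏ p ∈ S.filter (fun p => ¬ p ∣ g), p :=
          (Finset.prod_filter_mul_prod_filter_not S (· ∣ g) id).symm
        exact hcop.dvd_of_dvd_mul_right (hsplit ▸ hgd)
      exact Subtype.ext (eq_of_monic_of_associated
        (monic_prod_of_monic _ _ (fun p hp => (hirr p (Finset.mem_filter.mp hp).1).1)) hgm
        (associated_of_dvd_dvd h1 h2))
  rw [← Nat.card_congr (Equiv.ofBijective φ hbij), Nat.card_eq_fintype_card,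
    Fintype.card_coe, Finset.card_powerset]

end
end NMDaux
namespace NMDaux
noncomputable section

lemma pi4_apply (p : Polynomial (ZMod 4)) :
    pi4 p = p.map (ZMod.castHom dvd24 (ZMod 2)) := rfl

lemma four_zero : (2 : Polynomial (ZMod 4)) * 2 = 0 := by
  have h : ((4:ℕ) : ZMod 4) = 0 := by decide
  have h2 : (2 : Polynomial (ZMod 4)) * 2 = ((4:ℕ) : Polynomial (ZMod 4)) := by norm_num
  rw [h2, ← map_natCast (C : ZMod 4 →+* _), h, map_zero]

lemma two_R2 : (2 : Polynomial (ZMod 2)) = 0 := by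
  have h : ((2:ℕ) : ZMod 2) = 0 := by decide
  have h2 : (2 : Polynomial (ZMod 2)) = ((2:ℕ) : Polynomial (ZMod 2)) := by norm_num
  rw [h2, ← map_natCast (C : ZMod 2 →+* _), h, map_zero]

lemma cast_half_zero : ZMod.castHom dvd24 (ZMod 2) (half 0) = 0 := by decide

end
end NMDaux

namespace NMDaux
noncomputable section
open Polynomial

theorem main (n : ℕ) (hn : Odd n) (hpos : 0 < n)
    (S : Finset (Polynomial (ZMod 2)))
    (hirr : ∀ p ∈ S, p.Monic ∧ Irreducible p)
    (hprod : ∏ p ∈ S, p = (X ^ n - 1 : Polynomial (ZMod 2))) :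
    Nat.card {f : Polynomial (ZMod 4) // f.Monic ∧ f ∣ X ^ n - 1} = 2 ^ S.card := by
  classical
  have hsf : Squarefree (X ^ n - 1 : Polynomial (ZMod 2)) := hprod ▸ sf_prod S hirr
  have hpiF : pi4 (X ^ n - 1 : Polynomial (ZMod 4)) = X ^ n - 1 := by
    simp [pi4]
  have hcop : ∀ {g h : Polynomial (ZMod 2)}, g * h = X ^ n - 1 → IsCoprime g h := by
    intro g h hgh
    have hsq : Squarefree (g * h) := hgh ▸ hsf
    exact isRelPrime_iff_isCoprime.mp (squarefree_mul_iff.mp hsq).1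
  let Φ : {f : Polynomial (ZMod 4) // f.Monic ∧ f ∣ X ^ n - 1} →
      {g : Polynomial (ZMod 2) // g.Monic ∧ g ∣ X ^ n - 1} := fun f =>
    ⟨pi4 f.1, f.2.1.map _, hpiF ▸ map_dvd pi4 f.2.2⟩
  have hbij : Function.Bijective Φ := by
    constructor
    · rintro ⟨g₁, hg₁m, hg₁d⟩ ⟨g₂, hg₂m, hg₂d⟩ hΦ
      obtain ⟨c₁, hc₁⟩ := hg₁d
      obtain ⟨c₂, hc₂⟩ := hg₂d
      have hπ : pi4 g₁ = pi4 g₂ := congrArg Subtype.val hΦ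
      have hπF1 : pi4 g₁ * pi4 c₁ = X ^ n - 1 := by rw [← map_mul, ← hc₁, hpiF]
      have hπF2 : pi4 g₂ * pi4 c₂ = X ^ n - 1 := by rw [← map_mul, ← hc₂, hpiF]
      have hg1ne : (pi4 g₁) ≠ 0 := (hg₁m.map _).ne_zero
      have hπc : pi4 c₁ = pi4 c₂ := by
        apply mul_left_cancel₀ hg1ne
        rw [hπF1]; rw [hπ, hπF2]
      obtain ⟨a, b, hab⟩ := hcop hπF1
      set d := g₂ - g₁ with hdd
      set e := c₂ - c₁ with hee
      have hd0 : pi4 d = 0 := by rw [hdd, map_sub, ← hπ, sub_self]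
      have he0 : pi4 e = 0 := by rw [hee, map_sub, ← hπc, sub_self]
      have hdH := eq_two_H d hd0
      have heH := eq_two_H e he0
      have hde : d * e = 0 := by
        rw [hdH, heH]
        linear_combination (H d * H e) * four_zero
      have key : g₁ * e + d * c₁ = 0 := by
        have h0 : g₁ * e + d * c₁ + d * e = 0 := by
          rw [hdd, hee]; linear_combination hc₁ - hc₂
        linear_combination h0 - hde
      have key2 : pi4 (g₁ * H e + H d * c₁) = 0 := by
        rw [pi4_eq_zero_iff]
        calc (2 : Polynomial (ZMod 4)) * (g₁ * H e + H d * c₁)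
            = g₁ * (2 * H e) + (2 * H d) * c₁ := by ring
          _ = g₁ * e + d * c₁ := by rw [← hdH, ← heH]
          _ = 0 := key
      have hrel : pi4 g₁ * pi4 (H e) + pi4 (H d) * pi4 c₁ = 0 := by
        simpa [map_add, map_mul] using key2
      have hdvd : pi4 g₁ ∣ pi4 (H d) :=
        ⟨a * pi4 (H d) - b * pi4 (H e), by linear_combination b * hrel - pi4 (H d) * hab⟩
      have hN : g₂.natDegree = g₁.natDegree := by
        have h1 := hg₁m.natDegree_map (ZMod.castHom dvd24 (ZMod 2))
        have h2 := hg₂m.natDegree_map (ZMod.castHom dvd24 (ZMod 2))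
        rw [← pi4_apply] at h1 h2
        rw [← h1, ← h2, hπ]
      have hDdeg : (pi4 (H d)).degree < (pi4 g₁).degree := by
        have hdeg1 : (pi4 g₁).degree = (g₁.natDegree : WithBot ℕ) := by
          rw [degree_eq_natDegree hg1ne, pi4_apply, hg₁m.natDegree_map]
        rw [hdeg1, degree_lt_iff_coeff_zero]
        intro m hm
        have hm' : g₁.natDegree ≤ m := by exact_mod_cast hm
        have hcm : d.coeff m = 0 := by
          rcases hm'.eq_or_lt with heq | hlt
          · rw [hdd, coeff_sub, ← heq, hg₁m.coeff_natDegree]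
            have : g₂.coeff g₁.natDegree = 1 := by
              rw [← hN]; exact hg₂m.coeff_natDegree
            rw [this, sub_self]
          · rw [hdd, coeff_sub, coeff_eq_zero_of_natDegree_lt hlt,
              coeff_eq_zero_of_natDegree_lt (hN ▸ hlt), sub_self]
        rw [pi4_apply, coeff_map, coeff_H, hcm]
        exact cast_half_zero
      have hD0 : pi4 (H d) = 0 := by
        by_contra hne
        exact absurd (degree_le_of_dvd hdvd hne) (not_le.mpr hDdeg)
      have hd_zero : d = 0 := by
        rw [hdH, (pi4_eq_zero_iff _).mp hD0]
      have : g₁ = g₂ := by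
        have := sub_eq_zero.mp (hdd ▸ hd_zero)
        exact this.symm
      exact Subtype.ext this
    · rintro ⟨g', hgm', hgd'⟩
      obtain ⟨h', hh'⟩ := hgd'
      obtain ⟨a, b, hab⟩ := hcop hh'.symm
      set g₀ := plift g' with hg₀
      set h₀ := plift h' with hh₀
      set e := (X ^ n - 1 : Polynomial (ZMod 4)) - g₀ * h₀ with he_def
      have he0 : pi4 e = 0 := by
        rw [he_def, map_sub, map_mul, hg₀, hh₀, pi4_plift, pi4_plift, hpiF, ← hh', sub_self]
      have heH := eq_two_H e he0
      set E := pi4 (H e) with hE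
      set r := (E * b) %ₘ g' with hr
      set q := (E * b) /ₘ g' with hq
      have hrq : r + g' * q = E * b := modByMonic_add_div (E * b) g'
      set s := E * a + q * h' with hs
      have hg0 := plift_monic hgm'
      have hgm : (g₀ + 2 * plift r).Monic := by
        apply hg0.1.add_of_left
        calc ((2 : Polynomial (ZMod 4)) * plift r).degree ≤ r.degree := degree_two_plift_le r
          _ < g'.degree := degree_modByMonic_lt (E * b) hgm'
          _ = g₀.degree := hg0.2.symm
      have hmain : 2 * (g₀ * plift s + plift r * h₀) = 2 * H e := by
        have hz : pi4 (g₀ * plift s + plift r * h₀ - H e) = 0 := by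
          rw [map_sub, map_add, map_mul, map_mul, hg₀, hh₀, pi4_plift, pi4_plift,
            pi4_plift, pi4_plift, ← hE]
          rw [hs]
          linear_combination E * hab + h' * hrq
        have h2 := (pi4_eq_zero_iff _).mp hz
        linear_combination h2
      have hgh : (g₀ + 2 * plift r) * (h₀ + 2 * plift s) = X ^ n - 1 := by
        have step : (g₀ + 2 * plift r) * (h₀ + 2 * plift s)
            = g₀ * h₀ + 2 * (g₀ * plift s + plift r * h₀)
              + (2 * 2) * (plift r * plift s) := by ring
        rw [step, hmain, four_zero, ← heH]
        rw [he_def]; ring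
      refine ⟨⟨g₀ + 2 * plift r, hgm, ⟨h₀ + 2 * plift s, hgh.symm⟩⟩, ?_⟩
      apply Subtype.ext
      show pi4 (g₀ + 2 * plift r) = g'
      rw [map_add, map_mul, hg₀, pi4_plift]
      have : pi4 2 = (2 : Polynomial (ZMod 2)) := by
        rw [pi4_apply]; simp
      rw [this, two_R2, zero_mul, add_zero]
  have hcount := count2 hirr
  rw [hprod] at hcount
  rw [Nat.card_congr (Equiv.ofBijective Φ hbij), hcount]

end
end NMDaux

open Polynomial

theorem number_of_monic_divisors (n : ℕ) (hn : Odd n) (hpos : 0 < n)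
    (S : Finset (Polynomial (ZMod 2)))
    (hirr : ∀ p ∈ S, p.Monic ∧ Irreducible p)
    (hprod : ∏ p ∈ S, p = (X ^ n - 1 : Polynomial (ZMod 2))) :
    Nat.card {f : Polynomial (ZMod 4) // f.Monic ∧ f ∣ X ^ n - 1} = 2 ^ S.card :=
  NMDaux.main n hn hpos S hirr hprod
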